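/- Let Φ(λ) be the fundamental solution of the discrete symplectic system with Φ_{k₀}(λ) = I for all λ, and for a finite discrete interval I containing k₀ define φ(λ, I) := Σ_{k∈I} Φ_k(λ)* Ψ_k Φ_k(λ). Then the kernel and the range of φ(λ, I) are independent of λ ∈ ℂ. -/

import Mathlib

open Matrix
open scoped ComplexOrder


private lemma sum_mulVec' {ι κ : Type*} [Fintype ι] (I : Finset κ)
    (M : κ → Matrix ι ι ℂ) (ξ : ι → ℂ) :
    (∑ k ∈ I, M k) *ᵥ ξ = ∑ k ∈ I, M k *ᵥ ξ := by
  classical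
  induction I using Finset.induction with
  | empty => simp
  | insert _ _ h ih => simp [Finset.sum_insert h, Matrix.add_mulVec, ih]

private lemma dot_sum' {ι κ : Type*} [Fintype ι] (x : ι → ℂ) (I : Finset κ)
    (v : κ → ι → ℂ) : x ⬝ᵥ (∑ k ∈ I, v k) = ∑ k ∈ I, x ⬝ᵥ v k := by
  classical
  induction I using Finset.induction with
  | empty => simp
  | insert _ _ h ih => simp [Finset.sum_insert h, dotProduct_add, ih]

private lemma toEuclideanLin_eq {ι : Type*} [Fintype ι] [DecidableEq ι]
    (M : Matrix ι ι ℂ) (x : EuclideanSpace ℂ ι) :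
    Matrix.toEuclideanLin M x = M *ᵥ x := by
  rw [Matrix.toEuclideanLin_apply]

private lemma herm_range_eq_of_ker_eq {ι : Type*} [Fintype ι] [DecidableEq ι]
    (A B : Matrix ι ι ℂ) (hA : A.IsHermitian) (hB : B.IsHermitian)
    (hker : ∀ ξ : ι → ℂ, A *ᵥ ξ = 0 ↔ B *ᵥ ξ = 0) (v : ι → ℂ) :
    (∃ ξ, A *ᵥ ξ = v) ↔ (∃ ξ, B *ᵥ ξ = v) := by
  have key : ∀ (M : Matrix ι ι ℂ), M.IsHermitian →
      LinearMap.range (Matrix.toEuclideanLin M)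
        = (LinearMap.ker (Matrix.toEuclideanLin M))ᗮ := by
    intro M hM
    have hadj : LinearMap.adjoint (Matrix.toEuclideanLin M) = Matrix.toEuclideanLin M := by
      rw [← Matrix.toEuclideanLin_conjTranspose_eq_adjoint, hM.eq]
    apply Submodule.eq_of_le_of_finrank_eq
    · rintro _ ⟨x, rfl⟩
      rw [Submodule.mem_orthogonal]
      intro u hu
      have h1 : (inner ℂ u (Matrix.toEuclideanLin M x) : ℂ)
          = inner ℂ (LinearMap.adjoint (Matrix.toEuclideanLin M) u) x :=
        (LinearMap.adjoint_inner_left _ _ _).symm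
      rw [h1, hadj, LinearMap.mem_ker.mp hu, inner_zero_left]
    · have h1 := LinearMap.finrank_range_add_finrank_ker (Matrix.toEuclideanLin M)
      have h2 := Submodule.finrank_add_finrank_orthogonal
        (K := LinearMap.ker (Matrix.toEuclideanLin M))
      omega
  have hkerE : LinearMap.ker (Matrix.toEuclideanLin A)
      = LinearMap.ker (Matrix.toEuclideanLin B) := by
    ext x
    simp only [LinearMap.mem_ker, Matrix.toEuclideanLin_apply, WithLp.toLp_eq_zero]
    exact hker x
  have hrange : LinearMap.range (Matrix.toEuclideanLin A)
      = LinearMap.range (Matrix.toEuclideanLin B) := by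
    rw [key A hA, key B hB, hkerE]
  constructor
  · rintro ⟨ξ, hξ⟩
    have : (WithLp.toLp 2 v : EuclideanSpace ℂ ι) ∈ LinearMap.range (Matrix.toEuclideanLin B) := by
      rw [← hrange]
      exact ⟨WithLp.toLp 2 ξ, by rw [Matrix.toEuclideanLin_apply_piLp_toLp, hξ]⟩
    obtain ⟨y, hy⟩ := this
    exact ⟨y.ofLp, by rw [Matrix.toEuclideanLin_apply] at hy; exact WithLp.toLp_injective 2 hy⟩
  · rintro ⟨ξ, hξ⟩
    have : (WithLp.toLp 2 v : EuclideanSpace ℂ ι) ∈ LinearMap.range (Matrix.toEuclideanLin A) := by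
      rw [hrange]
      exact ⟨WithLp.toLp 2 ξ, by rw [Matrix.toEuclideanLin_apply_piLp_toLp, hξ]⟩
    obtain ⟨y, hy⟩ := this
    exact ⟨y.ofLp, by rw [Matrix.toEuclideanLin_apply] at hy; exact WithLp.toLp_injective 2 hy⟩

private lemma sum_psd_mulVec_zero {ι κ : Type*} [Fintype ι] [DecidableEq ι]
    (I : Finset κ) (P F : κ → Matrix ι ι ℂ) (hP : ∀ k, (P k).PosSemidef)
    (ξ : ι → ℂ) :
    (∑ k ∈ I, (F k)ᴴ * P k * F k) *ᵥ ξ = 0 ↔ ∀ k ∈ I, P k *ᵥ (F k *ᵥ ξ) = 0 := by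
  constructor
  · intro h
    have hterm : ∀ k ∈ I, star ξ ⬝ᵥ (((F k)ᴴ * P k * F k) *ᵥ ξ)
        = star (F k *ᵥ ξ) ⬝ᵥ (P k *ᵥ (F k *ᵥ ξ)) := by
      intro k _
      rw [mul_assoc, ← mulVec_mulVec, dotProduct_mulVec, ← star_mulVec,
        ← mulVec_mulVec]
    have hsum : (∑ k ∈ I, star (F k *ᵥ ξ) ⬝ᵥ (P k *ᵥ (F k *ᵥ ξ))) = 0 := by
      rw [← Finset.sum_congr rfl hterm, ← dot_sum', ← sum_mulVec', h, dotProduct_zero]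
    intro k hk
    have hz := (Finset.sum_eq_zero_iff_of_nonneg
      (fun k _ => ((hP k).dotProduct_mulVec_nonneg (F k *ᵥ ξ)))).mp hsum k hk
    exact ((hP k).dotProduct_mulVec_zero_iff _).mp hz
  · intro h
    rw [sum_mulVec']
    refine Finset.sum_eq_zero fun k hk => ?_
    rw [mul_assoc, ← mulVec_mulVec, ← mulVec_mulVec, h k hk, mulVec_zero]
theorem stmt16 (n : ℕ)
    (J : Matrix (Fin n ⊕ Fin n) (Fin n ⊕ Fin n) ℂ)
    (hJ : J = Matrix.fromBlocks 0 1 (-1) 0)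
    (S Ψ : ℕ → Matrix (Fin n ⊕ Fin n) (Fin n ⊕ Fin n) ℂ)
    (hS : ∀ k : ℕ, (S k)ᴴ * J * S k = J)
    (hΨpsd : ∀ k : ℕ, (Ψ k).PosSemidef)
    (hΨJ : ∀ k : ℕ, Ψ k * J * Ψ k = 0)
    (Φ : ℂ → ℕ → Matrix (Fin n ⊕ Fin n) (Fin n ⊕ Fin n) ℂ)
    (k₀ : ℕ)
    (hΦ : ∀ (l : ℂ) (k : ℕ),
      Φ l k = ((1 - l • (J * Ψ k)) * S k) * Φ l (k + 1))
    (hΦ₀ : ∀ l : ℂ, Φ l k₀ = 1)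
    (I : Finset ℕ) (hI : ∃ a b : ℕ, I = Finset.Icc a b) (hk₀ : k₀ ∈ I) :
    ∀ l μ : ℂ,
      (∀ ξ : (Fin n ⊕ Fin n) → ℂ,
        (∑ k ∈ I, (Φ l k)ᴴ * Ψ k * Φ l k) *ᵥ ξ = 0 ↔
          (∑ k ∈ I, (Φ μ k)ᴴ * Ψ k * Φ μ k) *ᵥ ξ = 0) ∧
      (∀ v : (Fin n ⊕ Fin n) → ℂ,
        (∃ ξ, (∑ k ∈ I, (Φ l k)ᴴ * Ψ k * Φ l k) *ᵥ ξ = v) ↔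
          (∃ ξ, (∑ k ∈ I, (Φ μ k)ᴴ * Ψ k * Φ μ k) *ᵥ ξ = v)) := by
  obtain ⟨a, b, rfl⟩ := hI
  rw [Finset.mem_Icc] at hk₀
  obtain ⟨hak₀, hk₀b⟩ := hk₀
  -- J has nonzero determinant
  have hJJ : J * J = -1 := by
    subst hJ
    rw [Matrix.fromBlocks_multiply]
    have h1 : (-1 : Matrix (Fin n ⊕ Fin n) (Fin n ⊕ Fin n) ℂ)
        = -Matrix.fromBlocks 1 0 0 1 := by rw [Matrix.fromBlocks_one]
    rw [h1, Matrix.fromBlocks_neg]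
    noncomm_ring
  have hdetJ : J.det ≠ 0 := by
    have h1 : J.det * J.det = (-1 : ℂ) ^ Fintype.card (Fin n ⊕ Fin n) := by
      rw [← Matrix.det_mul, hJJ]
      have : (-1 : Matrix (Fin n ⊕ Fin n) (Fin n ⊕ Fin n) ℂ) = -(1) := rfl
      rw [this, Matrix.det_neg, Matrix.det_one, mul_one]
    intro h0
    rw [h0, mul_zero] at h1
    exact (pow_ne_zero _ (by norm_num : (-1 : ℂ) ≠ 0)) h1.symm
  -- S k is invertible
  have hSinj : ∀ k, Function.Injective ((S k).mulVec) := by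
    intro k
    refine Matrix.mulVec_injective_iff_isUnit.mpr ((Matrix.isUnit_iff_isUnit_det _).mpr ?_)
    rw [isUnit_iff_ne_zero]
    intro h0
    have := congrArg Matrix.det (hS k)
    rw [Matrix.det_mul, Matrix.det_mul, h0, mul_zero] at this
    exact hdetJ this.symm
  -- nilpotency
  have hnil : ∀ k, (J * Ψ k) * (J * Ψ k) = 0 := by
    intro k
    rw [mul_assoc, ← mul_assoc (Ψ k) J (Ψ k), hΨJ k, mul_zero]
  have hinv : ∀ (c : ℂ) (k : ℕ),
      (1 + c • (J * Ψ k)) * (1 - c • (J * Ψ k)) = 1 := by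
    intro c k
    have h0 : (c • (J * Ψ k)) * (c • (J * Ψ k)) = 0 := by
      rw [Matrix.smul_mul, Matrix.mul_smul, hnil k, smul_zero, smul_zero]
    rw [mul_sub, mul_one, add_mul, one_mul, h0, add_zero]
    abel
  -- the c-free evolution when Ψ annihilates
  -- main invariance claim
  have hstepS : ∀ (c : ℂ) (k : ℕ) (ξ : (Fin n ⊕ Fin n) → ℂ),
      Ψ k *ᵥ (Φ c k *ᵥ ξ) = 0 →
      S k *ᵥ (Φ c (k + 1) *ᵥ ξ) = Φ c k *ᵥ ξ := by
    intro c k ξ hc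
    have h1 : Φ c k *ᵥ ξ = (1 - c • (J * Ψ k)) *ᵥ (S k *ᵥ (Φ c (k + 1) *ᵥ ξ)) := by
      conv_lhs => rw [hΦ c k]
      rw [mulVec_mulVec, mulVec_mulVec, mul_assoc]
    have h2 := congrArg (fun w => (1 + c • (J * Ψ k)) *ᵥ w) h1
    simp only [mulVec_mulVec] at h2
    rw [← mul_assoc, hinv c k, one_mul] at h2
    rw [← mulVec_mulVec, ← mulVec_mulVec, Matrix.add_mulVec, Matrix.one_mulVec,
      Matrix.smul_mulVec, ← mulVec_mulVec, hc, Matrix.mulVec_zero,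
      smul_zero, add_zero] at h2
    exact h2.symm
  have hstepDownForm : ∀ (c : ℂ) (k : ℕ) (ξ : (Fin n ⊕ Fin n) → ℂ),
      Φ c k *ᵥ ξ = S k *ᵥ (Φ c (k + 1) *ᵥ ξ)
        - c • (J *ᵥ (Ψ k *ᵥ (S k *ᵥ (Φ c (k + 1) *ᵥ ξ)))) := by
    intro c k ξ
    conv_lhs => rw [hΦ c k]
    rw [← mulVec_mulVec, ← mulVec_mulVec, Matrix.sub_mulVec, Matrix.one_mulVec,
      Matrix.smul_mulVec, ← mulVec_mulVec]
  have hinvariance : ∀ (l μ : ℂ) (ξ : (Fin n ⊕ Fin n) → ℂ),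
      (∀ k ∈ Finset.Icc a b, Ψ k *ᵥ (Φ l k *ᵥ ξ) = 0) →
      ∀ k ∈ Finset.Icc a b, Φ μ k *ᵥ ξ = Φ l k *ᵥ ξ := by
    intro l μ ξ h
    have up : ∀ j, k₀ ≤ j → j ≤ b → Φ μ j *ᵥ ξ = Φ l j *ᵥ ξ := by
      intro j hj
      induction j, hj using Nat.le_induction with
      | base => intro _; rw [hΦ₀, hΦ₀]
      | succ j hj ih =>
        intro hjb
        have hjb' : j ≤ b := by omega
        have hjI : j ∈ Finset.Icc a b := Finset.mem_Icc.mpr ⟨by omega, hjb'⟩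
        have heq := ih hjb'
        have hΨl : Ψ j *ᵥ (Φ l j *ᵥ ξ) = 0 := h j hjI
        have hΨμ : Ψ j *ᵥ (Φ μ j *ᵥ ξ) = 0 := by rw [heq]; exact hΨl
        have h1 := hstepS l j ξ hΨl
        have h2 := hstepS μ j ξ hΨμ
        apply hSinj j
        rw [h1, h2, heq]
    have down : ∀ d j, j + d = k₀ → a ≤ j → Φ μ j *ᵥ ξ = Φ l j *ᵥ ξ := by
      intro d
      induction d with
      | zero =>
        intro j hj _
        have : j = k₀ := by omega
        subst this
        rw [hΦ₀, hΦ₀]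
      | succ d ih =>
        intro j hjd hja
        have heq : Φ μ (j + 1) *ᵥ ξ = Φ l (j + 1) *ᵥ ξ := ih (j + 1) (by omega) (by omega)
        have hjI : j ∈ Finset.Icc a b := Finset.mem_Icc.mpr ⟨hja, by omega⟩
        have hΨl : Ψ j *ᵥ (Φ l j *ᵥ ξ) = 0 := h j hjI
        -- derive Ψ j *ᵥ (S j *ᵥ y) = 0
        have hform := hstepDownForm l j ξ
        have hΨform := congrArg (fun w => Ψ j *ᵥ w) hform
        have hzero : Ψ j *ᵥ (J *ᵥ (Ψ j *ᵥ (S j *ᵥ (Φ l (j + 1) *ᵥ ξ)))) = 0 := by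
          rw [mulVec_mulVec, mulVec_mulVec, hΨJ j, Matrix.zero_mulVec]
        rw [Matrix.mulVec_sub, Matrix.mulVec_smul, hzero, smul_zero, sub_zero, hΨl] at hΨform
        have hΨSy : Ψ j *ᵥ (S j *ᵥ (Φ l (j + 1) *ᵥ ξ)) = 0 := hΨform.symm
        rw [hstepDownForm μ j ξ, hstepDownForm l j ξ, heq, hΨSy, Matrix.mulVec_zero,
          smul_zero, smul_zero]
    intro k hk
    rw [Finset.mem_Icc] at hk
    rcases le_or_gt k₀ k with hc | hc
    · exact up k hc hk.2
    · exact down (k₀ - k) k (by omega) hk.1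
  -- kernel transfer
  have hker1 : ∀ (l μ : ℂ) (ξ : (Fin n ⊕ Fin n) → ℂ),
      (∑ k ∈ Finset.Icc a b, (Φ l k)ᴴ * Ψ k * Φ l k) *ᵥ ξ = 0 →
      (∑ k ∈ Finset.Icc a b, (Φ μ k)ᴴ * Ψ k * Φ μ k) *ᵥ ξ = 0 := by
    intro l μ ξ h
    rw [sum_psd_mulVec_zero _ _ _ hΨpsd] at h ⊢
    intro k hk
    rw [hinvariance l μ ξ h k hk]
    exact h k hk
  have hkeriff : ∀ (l μ : ℂ) (ξ : (Fin n ⊕ Fin n) → ℂ),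
      (∑ k ∈ Finset.Icc a b, (Φ l k)ᴴ * Ψ k * Φ l k) *ᵥ ξ = 0 ↔
        (∑ k ∈ Finset.Icc a b, (Φ μ k)ᴴ * Ψ k * Φ μ k) *ᵥ ξ = 0 :=
    fun l μ ξ => ⟨hker1 l μ ξ, hker1 μ l ξ⟩
  intro l μ
  refine ⟨hkeriff l μ, ?_⟩
  -- range transfer via Hermitian structure
  have hherm : ∀ c : ℂ,
      (∑ k ∈ Finset.Icc a b, (Φ c k)ᴴ * Ψ k * Φ c k).IsHermitian := by
    intro c
    have : ∀ k ∈ Finset.Icc a b, ((Φ c k)ᴴ * Ψ k * Φ c k).IsHermitian :=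
      fun k _ => ((hΨpsd k).conjTranspose_mul_mul_same (Φ c k)).1
    unfold Matrix.IsHermitian
    rw [Matrix.conjTranspose_sum]
    exact Finset.sum_congr rfl this
  exact herm_range_eq_of_ker_eq _ _ (hherm l) (hherm μ) (hkeriff l μ)
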